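/- The sequence h = (1, 3, 6, 10, 9, 7, 3, 1) is not a pure O-sequence, and h fails Hibi's inequalities (there is an i ≤ s/2 with h_i > h_{s-i}, e.g. h_3 = 10 > 7 = h_{s-3}). The sequence h' = (1, 3, 6, 4, 1) satisfies Hibi's inequalities (h'_i ≤ h'_{s-i} for i ≤ s/2) but is also not a pure O-sequence. -/

import Mathlib

/-- `h : ℕ → ℤ` is a pure O-sequence: it is the f-vector of a nonempty finite order ideal
of monomials all of whose maximal elements have the same degree. -/
def IsPureOSequence (h : ℕ → ℤ) : Prop :=
  ∃ (N : ℕ) (Γ : Finset (Fin N → ℕ)),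
    Γ.Nonempty ∧
      (∀ μ ∈ Γ, ∀ ν : Fin N → ℕ, ν ≤ μ → ν ∈ Γ) ∧
      (∃ d : ℕ, ∀ μ ∈ Γ, (∀ ν ∈ Γ, μ ≤ ν → μ = ν) → ∑ j, μ j = d) ∧
      (∀ i : ℕ, ((Γ.filter fun μ => ∑ j, μ j = i).card : ℤ) = h i)

lemma multiset_card_finset_sum {α β : Type*} [DecidableEq β] (s : Finset β) (f : β → Multiset α) :
    Multiset.card (∑ x ∈ s, f x) = ∑ x ∈ s, Multiset.card (f x) := by
  induction s using Finset.induction with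
  | empty => simp
  | insert _ _ h ih => simp [Finset.sum_insert h, ih]

lemma sum_eq_one_single {N : ℕ} (μ : Fin N → ℕ) (hμ : ∑ j, μ j = 1) :
    ∃ j, μ = Pi.single j 1 := by
  classical
  have hne : ∃ j, μ j ≠ 0 := by
    by_contra hc
    push_neg at hc
    simp [hc] at hμ
  obtain ⟨j, hj⟩ := hne
  refine ⟨j, funext fun i => ?_⟩
  have hle : μ j ≤ ∑ i, μ i := Finset.single_le_sum (fun i _ => Nat.zero_le _) (Finset.mem_univ j)
  have hμj : μ j = 1 := by omega
  rcases eq_or_ne i j with rfl | hij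
  · simp [hμj]
  · have hzero : ∑ i ∈ (Finset.univ.erase j), μ i = 0 := by
      have := Finset.add_sum_erase Finset.univ μ (Finset.mem_univ j)
      omega
    have : μ i = 0 := by
      have := Finset.sum_eq_zero_iff.1 hzero i (Finset.mem_erase.2 ⟨hij, Finset.mem_univ i⟩)
      exact this
    simp [this, Pi.single_eq_of_ne hij]

lemma key_not_pure (h : ℕ → ℤ) (s k : ℕ)
    (h1 : h 1 = 3)
    (hks : h k = (Nat.multichoose 3 k : ℤ))
    (hs : h s = 1)
    (hgt : ∀ i, s < i → h i = 0)
    (hsk : s < 3 * k) : ¬ IsPureOSequence h := by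
  rintro ⟨N, Γ, -, hdown, ⟨d, hd⟩, hcount⟩
  classical
  -- the support variables
  set S : Finset (Fin N) := Finset.univ.filter (fun j => Pi.single j 1 ∈ Γ) with hS
  have hsupp : ∀ μ ∈ Γ, ∀ j, μ j ≠ 0 → j ∈ S := by
    intro μ hμ j hj
    simp only [hS, Finset.mem_filter, Finset.mem_univ, true_and]
    apply hdown μ hμ
    intro i
    rcases eq_or_ne i j with rfl | hij
    · simp only [Pi.single_eq_same]; omega
    · simp [Pi.single_eq_of_ne hij]
  have hsumS : ∀ μ ∈ Γ, ∑ j ∈ S, μ j = ∑ j, μ j := by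
    intro μ hμ
    refine Finset.sum_subset (Finset.subset_univ S) ?_
    intro j _ hjS
    by_contra hc
    exact hjS (hsupp μ hμ j hc)
  -- S has 3 elements
  have hScard : S.card = 3 := by
    have himg : (Γ.filter fun μ => ∑ j, μ j = 1) = S.image (fun j => Pi.single j 1) := by
      ext μ
      simp only [Finset.mem_filter, Finset.mem_image]
      constructor
      · rintro ⟨hμΓ, hμ1⟩
        obtain ⟨j, rfl⟩ := sum_eq_one_single μ hμ1
        exact ⟨j, hsupp _ hμΓ j (by simp), rfl⟩
      · rintro ⟨j, hj, rfl⟩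
        have hjΓ : Pi.single j 1 ∈ Γ := by simpa [hS] using hj
        refine ⟨hjΓ, ?_⟩
        simp [Finset.sum_pi_single]
    have h3 : (Γ.filter fun μ => ∑ j, μ j = 1).card = 3 := by
      have := hcount 1; rw [h1] at this; exact_mod_cast this
    rw [himg, Finset.card_image_of_injective _ ?_] at h3
    · exact h3
    · intro a b hab
      by_contra hne
      have h2 : (Pi.single a 1 : Fin N → ℕ) = Pi.single b 1 := by exact hab
      have := congrFun h2 a
      rw [Pi.single_eq_same, Pi.single_eq_of_ne hne] at this
      exact one_ne_zero this
  -- every element of Γ lies below a maximal element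
  have hmax : ∀ μ ∈ Γ, ∃ ν ∈ Γ, μ ≤ ν ∧ (∀ ρ ∈ Γ, ν ≤ ρ → ν = ρ) := by
    intro μ hμ
    obtain ⟨ν, hν, hνmax⟩ := Finset.exists_max_image (Γ.filter fun ρ => μ ≤ ρ)
      (fun ρ => ∑ j, ρ j) ⟨μ, by simp [hμ]⟩
    simp only [Finset.mem_filter] at hν
    refine ⟨ν, hν.1, hν.2, ?_⟩
    intro ρ hρ hle
    have hρmem : ρ ∈ Γ.filter fun ρ => μ ≤ ρ := by
      simp only [Finset.mem_filter]
      exact ⟨hρ, le_trans hν.2 hle⟩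
    have hsum : ∑ j, ρ j ≤ ∑ j, ν j := hνmax ρ hρmem
    have hsum' : ∑ j, ν j ≤ ∑ j, ρ j := Finset.sum_le_sum (fun i _ => hle i)
    funext i
    exact (Finset.sum_eq_sum_iff_of_le (fun i _ => hle i)).1
      (le_antisymm hsum' hsum) i (Finset.mem_univ i)
  -- the unique top-degree element
  have hs1 : (Γ.filter fun μ => ∑ j, μ j = s).card = 1 := by
    have := hcount s; rw [hs] at this; exact_mod_cast this
  obtain ⟨π, hπ⟩ := Finset.card_eq_one.1 hs1
  have hπΓ : π ∈ Γ ∧ ∑ j, π j = s := by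
    have : π ∈ Γ.filter fun μ => ∑ j, μ j = s := hπ ▸ Finset.mem_singleton_self π
    simpa using this
  -- d = s
  obtain ⟨ν, hνΓ, hπν, hνmax⟩ := hmax π hπΓ.1
  have hνd : ∑ j, ν j = d := hd ν hνΓ hνmax
  have hsd : s ≤ d := by
    calc s = ∑ j, π j := hπΓ.2.symm
    _ ≤ ∑ j, ν j := Finset.sum_le_sum (fun i _ => hπν i)
    _ = d := hνd
  have hdles : d ≤ s := by
    by_contra hlt
    push_neg at hlt
    have h0 : (Γ.filter fun μ => ∑ j, μ j = d).card = 0 := by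
      have := hcount d; rw [hgt d hlt] at this; exact_mod_cast this
    rw [Finset.card_eq_zero] at h0
    have : ν ∈ Γ.filter fun μ => ∑ j, μ j = d := by
      simp [hνΓ, hνd]
    rw [h0] at this
    exact absurd this (Finset.notMem_empty ν)
  have hds : d = s := le_antisymm hdles hsd
  -- every maximal element equals π
  have hmaxπ : ∀ ρ ∈ Γ, (∀ τ ∈ Γ, ρ ≤ τ → ρ = τ) → ρ = π := by
    intro ρ hρ hρmax
    have : ρ ∈ Γ.filter fun μ => ∑ j, μ j = s := by
      simp only [Finset.mem_filter]
      exact ⟨hρ, hds ▸ hd ρ hρ hρmax⟩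
    rw [hπ] at this
    exact Finset.mem_singleton.1 this
  -- counting degree-k monomials: for each j ∈ S there is μ ∈ Γ with μ j = k
  set A : Finset (Fin N → ℕ) := Γ.filter fun μ => ∑ j, μ j = k with hA
  have hAcard : A.card = Nat.multichoose 3 k := by
    have := hcount k; rw [hks] at this; exact_mod_cast this
  -- the multiset map
  set mult : (Fin N → ℕ) → Multiset ↥S :=
    fun μ => ∑ j ∈ S.attach, Multiset.replicate (μ ↑j) j with hmult
  have hcountmult : ∀ μ (j0 : ↥S), Multiset.count j0 (mult μ) = μ ↑j0 := by
    intro μ j0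
    rw [hmult]
    rw [Multiset.count_sum']
    rw [Finset.sum_eq_single j0]
    · simp [Multiset.count_replicate]
    · intro b _ hb
      rw [Multiset.count_replicate, if_neg hb]
    · intro hj0
      exact absurd (Finset.mem_attach S j0) hj0
  have hcardmult : ∀ μ ∈ A, Multiset.card (mult μ) = k := by
    intro μ hμ
    simp only [hA, Finset.mem_filter] at hμ
    rw [hmult]
    rw [multiset_card_finset_sum]
    simp only [Multiset.card_replicate]
    rw [Finset.sum_attach S (fun j => μ j), hsumS μ hμ.1, hμ.2]
  set g : ∀ μ ∈ A, Sym ↥S k := fun μ hμ => ⟨mult μ, hcardmult μ hμ⟩ with hg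
  have hginj : ∀ μ₁ μ₂ (h₁ : μ₁ ∈ A) (h₂ : μ₂ ∈ A), g μ₁ h₁ = g μ₂ h₂ → μ₁ = μ₂ := by
    intro μ₁ μ₂ h₁ h₂ heq
    have hmeq : mult μ₁ = mult μ₂ := congrArg Subtype.val heq
    simp only [hA, Finset.mem_filter] at h₁ h₂
    funext i
    by_cases hi : i ∈ S
    · have := congrArg (Multiset.count (⟨i, hi⟩ : ↥S)) hmeq
      rwa [hcountmult, hcountmult] at this
    · have h1 : μ₁ i = 0 := by
        by_contra hc; exact hi (hsupp μ₁ h₁.1 i hc)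
      have h2 : μ₂ i = 0 := by
        by_contra hc; exact hi (hsupp μ₂ h₂.1 i hc)
      rw [h1, h2]
  have hcardSym : (Finset.univ : Finset (Sym ↥S k)).card ≤ A.card := by
    rw [Finset.card_univ, Sym.card_sym_eq_multichoose]
    have : Fintype.card ↥S = 3 := by rw [Fintype.card_coe, hScard]
    rw [this, hAcard]
  have hsurj := Finset.surj_on_of_inj_on_of_card_le g
    (fun μ hμ => Finset.mem_univ _) hginj hcardSym
  have hkey : ∀ j ∈ S, ∃ μ ∈ Γ, μ j = k := by
    intro j hj
    obtain ⟨μ, hμA, hμeq⟩ := hsurj (Sym.replicate k (⟨j, hj⟩ : ↥S)) (Finset.mem_univ _)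
    have hμΓ : μ ∈ Γ := (Finset.mem_filter.1 hμA).1
    refine ⟨μ, hμΓ, ?_⟩
    have : Multiset.count (⟨j, hj⟩ : ↥S) (mult μ) = k := by
      have hval : mult μ = Multiset.replicate k (⟨j, hj⟩ : ↥S) := by
        have := congrArg Subtype.val hμeq
        exact this.symm
      rw [hval, Multiset.count_replicate, if_pos rfl]
    rwa [hcountmult] at this
  -- finish: π j ≥ k for all j ∈ S, so s = ∑ π ≥ 3k
  have hπge : ∀ j ∈ S, k ≤ π j := by
    intro j hj
    obtain ⟨μ, hμΓ, hμj⟩ := hkey j hj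
    obtain ⟨ρ, hρΓ, hμρ, hρmax⟩ := hmax μ hμΓ
    have : ρ = π := hmaxπ ρ hρΓ hρmax
    calc k = μ j := hμj.symm
    _ ≤ ρ j := hμρ j
    _ = π j := by rw [this]
  have hbig : 3 * k ≤ ∑ j ∈ S, π j := by
    have := Finset.card_nsmul_le_sum S π k hπge
    rw [hScard] at this
    simpa [mul_comm] using this
  have hfin : 3 * k ≤ s := by
    calc 3 * k ≤ ∑ j ∈ S, π j := hbig
    _ = ∑ j, π j := hsumS π hπΓ.1
    _ = s := hπΓ.2
  exact absurd hsk (not_lt.2 hfin)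

/-- The sequence `(1,3,6,10,9,7,3,1)` is not a pure O-sequence and fails Hibi's
inequalities (e.g. `h_3 = 10 > 7 = h_4`), while `(1,3,6,4,1)` satisfies Hibi's
inequalities (`h'_i ≤ h'_{s-i}` for `i ≤ s/2`) but is also not a pure O-sequence. -/
theorem examples_not_pure :
    ∀ h h' : ℕ → ℤ,
      (h = fun i => if i = 0 then 1 else if i = 1 then 3 else if i = 2 then 6
        else if i = 3 then 10 else if i = 4 then 9 else if i = 5 then 7
        else if i = 6 then 3 else if i = 7 then 1 else 0) →
      (h' = fun i => if i = 0 then 1 else if i = 1 then 3 else if i = 2 then 6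
        else if i = 3 then 4 else if i = 4 then 1 else 0) →
      (¬ IsPureOSequence h) ∧ (∃ i ≤ 3, h (7 - i) < h i) ∧
        (∀ i ≤ 2, h' i ≤ h' (4 - i)) ∧ ¬ IsPureOSequence h' := by
  intro h h' hh hh'
  subst hh hh'
  have hmc3 : Nat.multichoose 3 3 = 10 := by
    rw [Nat.multichoose_eq]; decide
  have hmc2 : Nat.multichoose 3 2 = 6 := by
    rw [Nat.multichoose_eq]; decide
  refine ⟨?_, ⟨3, by norm_num, by norm_num⟩, ?_, ?_⟩
  · apply key_not_pure _ 7 3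
    · norm_num
    · rw [hmc3]; norm_num
    · norm_num
    · intro i hi
      split_ifs <;> omega
    · omega
  · intro i hi
    interval_cases i <;> norm_num
  · apply key_not_pure _ 4 2
    · norm_num
    · rw [hmc2]; norm_num
    · norm_num
    · intro i hi
      split_ifs <;> omega
    · omega
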